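/- arXiv:2201.00078 — 2 statements merged into one kernel-verified Lean document; each statement's English description precedes it below -/
import Mathlib

section
/- Let G be a finite simple connected cubic graph and S a set of vertices. If S is a P3-hull set (i.e., iterating the rule that a vertex becomes infected when at least two of its neighbors are infected, starting from S, eventually infects all vertices), then the induced subgraph on the complement of S is acyclic. -/
open SimpleGraph

def infectStep {V : Type*} (G : SimpleGraph V) (S : Set V) : Set V :=
  S ∪ {v | ∃ a b, a ≠ b ∧ a ∈ S ∧ b ∈ S ∧ G.Adj v a ∧ G.Adj v b}

def infectIter {V : Type*} (G : SimpleGraph V) (S : Set V) : ℕ → Set V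
  | 0 => S
  | p + 1 => infectStep G (infectIter G S p)

def IsHullSet {V : Type*} (G : SimpleGraph V) (S : Set V) : Prop :=
  ∃ p, infectIter G S p = Set.univ

noncomputable def hullNumber {V : Type*} (G : SimpleGraph V) : ℕ :=
  sInf {m | ∃ S : Set V, S.ncard = m ∧ IsHullSet G S}

noncomputable def infectTime {V : Type*} (G : SimpleGraph V) (S : Set V) : ℕ :=
  sInf {p | infectIter G S p = Set.univ}

def IsCubic {V : Type*} (G : SimpleGraph V) : Prop :=
  ∀ v, {w | G.Adj v w}.ncard = 3

def IsDecyclingSet {V : Type*} (G : SimpleGraph V) (S : Set V) : Prop :=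
  (G.induce Sᶜ).IsAcyclic

noncomputable def decyclingNumber {V : Type*} (G : SimpleGraph V) : ℕ :=
  sInf {m | ∃ S : Set V, S.ncard = m ∧ IsDecyclingSet G S}

def pHull {V : Type*} (G : SimpleGraph V) (S : Set V) : Set V :=
  ⋃ p, infectIter G S p

noncomputable def graphDiam {V : Type*} (G : SimpleGraph V) : ℕ :=
  sSup {d | ∃ a b, d = G.dist a b}

noncomputable def maxCompDiam {V : Type*} (G : SimpleGraph V) : ℕ :=
  sSup {d | ∃ c : G.ConnectedComponent, d = graphDiam (G.induce c.supp)}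

def genPetersen (n k : ℕ) [NeZero n] : SimpleGraph (Fin n ⊕ Fin n) :=
  SimpleGraph.fromRel fun x y =>
    match x, y with
    | Sum.inl i, Sum.inl j => j = i + 1
    | Sum.inl i, Sum.inr j => i = j
    | Sum.inr i, Sum.inr j => j = i + Fin.ofNat n k
    | _, _ => False

lemma walk_support_get {V : Type*} {G : SimpleGraph V} :
    ∀ {u v : V} (p : G.Walk u v) (i : ℕ) (h : i < p.support.length),
      p.support.get ⟨i, h⟩ = p.getVert i := by
  intro u v p
  induction p with
  | nil =>
    intro i h
    simp only [SimpleGraph.Walk.support_nil, List.length_singleton] at h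
    obtain rfl : i = 0 := by omega
    simp [SimpleGraph.Walk.getVert]
  | cons hadj q ih =>
    intro i h
    cases i with
    | zero => simp
    | succ j =>
      simp only [SimpleGraph.Walk.support_cons, List.get_cons_succ,
        SimpleGraph.Walk.getVert_cons_succ]
      exact ih j (by simpa [SimpleGraph.Walk.support_cons] using Nat.lt_of_succ_lt_succ h)

lemma cycle_two_nbrs {V : Type*} {G : SimpleGraph V} {u : V} {c : G.Walk u u}
    (hc : c.IsCycle) {v : V} (hv : v ∈ c.support) :
    ∃ a b, a ≠ b ∧ a ∈ c.support ∧ b ∈ c.support ∧ G.Adj v a ∧ G.Adj v b := by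
  classical
  set c' := c.rotate _ hv with hc'def
  have hc' : c'.IsCycle := hc.rotate hv
  have hlen : 3 ≤ c'.length := hc'.three_le_length
  have hsub : ∀ x, x ∈ c'.support → x ∈ c.support := by
    intro x hx
    rw [SimpleGraph.Walk.support_eq_cons] at hx
    rcases List.mem_cons.mp hx with h | h
    · exact h ▸ hv
    · exact List.mem_of_mem_tail
        (((SimpleGraph.Walk.support_rotate c _ hv).mem_iff).mp h)
  set n := c'.length with hn
  refine ⟨c'.getVert 1, c'.getVert (n - 1), ?_, ?_, ?_, ?_, ?_⟩
  · -- distinct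
    intro heq
    have hnodup := hc'.support_nodup
    have hlt1 : 1 < c'.support.length := by
      rw [SimpleGraph.Walk.length_support]; omega
    have hlt2 : n - 1 < c'.support.length := by
      rw [SimpleGraph.Walk.length_support]; omega
    have ht1 : 0 < c'.support.tail.length := by
      simp [List.length_tail, SimpleGraph.Walk.length_support]; omega
    have ht2 : n - 2 < c'.support.tail.length := by
      simp [List.length_tail, SimpleGraph.Walk.length_support]; omega
    have e1 : c'.support.tail.get ⟨0, ht1⟩ = c'.getVert 1 := by
      rw [List.get_tail]; exact walk_support_get c' 1 hlt1
    have e2 : c'.support.tail.get ⟨n - 2, ht2⟩ = c'.getVert (n - 1) := by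
      rw [List.get_tail]
      have : n - 2 + 1 = n - 1 := by omega
      rw [show (⟨n-2+1, by omega⟩ : Fin c'.support.length) = ⟨n-1, hlt2⟩ by
        simp [this]]
      exact walk_support_get c' (n - 1) hlt2
    have hinj := (List.Nodup.get_inj_iff hnodup
      (i := ⟨0, ht1⟩) (j := ⟨n - 2, ht2⟩)).mp (e1.trans (heq.trans e2.symm))
    have : (0 : ℕ) = n - 2 := congrArg Fin.val hinj
    omega
  · exact hsub _ ((SimpleGraph.Walk.mem_support_iff_exists_getVert).mpr
      ⟨1, rfl, by omega⟩)
  · exact hsub _ ((SimpleGraph.Walk.mem_support_iff_exists_getVert).mpr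
      ⟨n - 1, rfl, by omega⟩)
  · have := c'.adj_getVert_succ (i := 0) (by omega)
    simpa using this
  · have := c'.adj_getVert_succ (i := n - 1) (by omega)
    rw [show n - 1 + 1 = n by omega] at this
    rw [hn] at this
    rw [SimpleGraph.Walk.getVert_length] at this
    exact this.symm

theorem stmt0 {V : Type*} [Fintype V] (G : SimpleGraph V)
    (hcub : IsCubic G) (hconn : G.Connected) (S : Set V)
    (hS : IsHullSet G S) : (G.induce Sᶜ).IsAcyclic := by
  intro v c hc
  obtain ⟨p, hp⟩ := hS
  set C : Set V := Subtype.val '' {x : ↥(Sᶜ) | x ∈ c.support} with hC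
  have key : ∀ q, ∀ x ∈ C, x ∉ infectIter G S q := by
    intro q
    induction q with
    | zero =>
      rintro x ⟨y, _, rfl⟩ hx
      exact y.2 hx
    | succ q ih =>
      rintro x hxC hx
      rcases hx with hx | hx
      · exact ih x hxC hx
      · obtain ⟨a', b', hab', ha', hb', hadj1, hadj2⟩ := hx
        obtain ⟨y, hy, rfl⟩ := hxC
        obtain ⟨a, b, hab, haS, hbS, hya, hyb⟩ := cycle_two_nbrs hc hy
        have hGa : G.Adj ↑y ↑a := hya
        have hGb : G.Adj ↑y ↑b := hyb
        have haC : (↑a : V) ∈ C := ⟨a, haS, rfl⟩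
        have hbC : (↑b : V) ∈ C := ⟨b, hbS, rfl⟩
        have haT : (↑a : V) ∉ infectIter G S q := ih _ haC
        have hbT : (↑b : V) ∉ infectIter G S q := ih _ hbC
        -- four distinct neighbors of ↑y
        have hab : (↑a : V) ≠ ↑b := fun h => hab (Subtype.coe_injective h)
        have haa' : (↑a : V) ≠ a' := fun h => haT (h ▸ ha')
        have hab2 : (↑a : V) ≠ b' := fun h => haT (h ▸ hb')
        have hba' : (↑b : V) ≠ a' := fun h => hbT (h ▸ ha')
        have hbb' : (↑b : V) ≠ b' := fun h => hbT (h ▸ hb')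
        have hsub : ({↑a, ↑b, a', b'} : Set V) ⊆ {w | G.Adj (↑y) w} := by
          intro w hw
          simp only [Set.mem_insert_iff, Set.mem_singleton_iff] at hw
          rcases hw with rfl | rfl | rfl | rfl <;> assumption
        have h4 : ({↑a, ↑b, a', b'} : Set V).ncard = 4 := by
          rw [Set.ncard_insert_of_notMem (by simp [hab, haa', hab2])
              (Set.toFinite _),
            Set.ncard_insert_of_notMem (by simp [hba', hbb']) (Set.toFinite _),
            Set.ncard_insert_of_notMem (by simp [hab']) (Set.toFinite _),
            Set.ncard_singleton]
        have hle := Set.ncard_le_ncard hsub (Set.toFinite _)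
        rw [h4, hcub ↑y] at hle
        omega
  have hv : (↑v : V) ∈ C := ⟨v, c.start_mem_support, rfl⟩
  exact key p _ hv (by rw [hp]; trivial)
end

section
/- Let σ ∈ S_n be a nontrivial permutation written as a product of m disjoint cycles each of length ≥ 3, and let G = GGP(n,σ). Then h_{P3}(G) ≥ ⌈(n+1)/2⌉; if every cycle of σ has even length then h_{P3}(G) = (n+2)/2; and if k ≥ 1 cycles of σ have odd length then h_{P3}(G) ≤ (n+k)/2. -/
open SimpleGraph

def GGP (n : ℕ) [NeZero n] (σ : Equiv.Perm (Fin n)) : SimpleGraph (Fin n ⊕ Fin n) :=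
  SimpleGraph.fromRel fun x y =>
    match x, y with
    | Sum.inl i, Sum.inl j => j = i + 1
    | Sum.inl i, Sum.inr j => i = j
    | Sum.inr i, Sum.inr j => j = σ i
    | _, _ => False

open Finset Equiv Equiv.Perm Sum
set_option linter.unusedSectionVars false
set_option maxHeartbeats 1000000

section General
variable {V : Type*} (G : SimpleGraph V)

lemma subset_infectStep (S : Set V) : S ⊆ infectStep G S := Set.subset_union_left

lemma infectStep_mono {S S' : Set V} (h : S ⊆ S') : infectStep G S ⊆ infectStep G S' := by
  apply Set.union_subset_union h
  rintro v ⟨a, b, hab, ha, hb, h1, h2⟩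
  exact ⟨a, b, hab, h ha, h hb, h1, h2⟩

lemma infectIter_mono {S S' : Set V} (h : S ⊆ S') (p : ℕ) :
    infectIter G S p ⊆ infectIter G S' p := by
  induction p with
  | zero => exact h
  | succ p ih => exact infectStep_mono G ih

lemma subset_infectIter (S : Set V) (p : ℕ) : S ⊆ infectIter G S p := by
  induction p with
  | zero => exact subset_rfl
  | succ p ih => exact ih.trans (subset_infectStep G _)

lemma infectIter_mono_p (S : Set V) {p q : ℕ} (h : p ≤ q) :
    infectIter G S p ⊆ infectIter G S q := by
  induction q with
  | zero => simp [Nat.le_zero.mp h]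
  | succ q ih =>
    rcases Nat.lt_or_ge p (q+1) with h' | h'
    · exact (ih (Nat.lt_succ_iff.mp h')).trans (subset_infectStep G _)
    · have : p = q + 1 := le_antisymm h h'
      subst this; exact subset_rfl

lemma mem_infectIter_succ {S : Set V} {p : ℕ} {v a b : V} (hab : a ≠ b)
    (ha : a ∈ infectIter G S p) (hb : b ∈ infectIter G S p)
    (h1 : G.Adj v a) (h2 : G.Adj v b) : v ∈ infectIter G S (p + 1) :=
  Or.inr ⟨a, b, hab, ha, hb, h1, h2⟩

lemma isHullSet_mono {S S' : Set V} (h : S ⊆ S') (hS : IsHullSet G S) : IsHullSet G S' := by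
  obtain ⟨p, hp⟩ := hS
  exact ⟨p, Set.eq_univ_of_univ_subset (hp ▸ infectIter_mono G h p)⟩

lemma hullNumber_le {S : Set V} (hS : IsHullSet G S) : hullNumber G ≤ S.ncard :=
  Nat.sInf_le ⟨S, rfl, hS⟩

end General

section Lower
variable {V : Type*} [Fintype V] [DecidableEq V] (G : SimpleGraph V) [DecidableRel G.Adj]

noncomputable def Wgt (A : Finset V) : ℕ := ∑ v ∈ A, ((G.neighborFinset v) \ A).card

lemma Wgt_univ : Wgt G (univ : Finset V) = 0 := by
  simp [Wgt]

lemma Wgt_le (hdeg : ∀ v : V, (G.neighborFinset v).card = 3) (A : Finset V) :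
    Wgt G A ≤ 3 * A.card := by
  calc Wgt G A ≤ ∑ _v ∈ A, 3 := by
        apply Finset.sum_le_sum
        intro v _
        exact le_trans (Finset.card_le_card (Finset.sdiff_subset)) (le_of_eq (hdeg v))
    _ = 3 * A.card := by rw [Finset.sum_const, smul_eq_mul, mul_comm]

lemma Wgt_step (hdeg : ∀ v : V, (G.neighborFinset v).card = 3) {A : Finset V} {v : V}
    (hv : v ∉ A) :
    Wgt G (insert v A) + 2 * ((G.neighborFinset v) ∩ A).card = Wgt G A + 3 := by
  set d := ((G.neighborFinset v) ∩ A).card with hd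
  have claim1 : ((G.neighborFinset v) \ insert v A).card + d = 3 := by
    have h1 : (G.neighborFinset v) \ insert v A = (G.neighborFinset v) \ A := by
      ext w
      simp only [mem_sdiff, mem_insert, mem_neighborFinset]
      constructor
      · rintro ⟨h, h2⟩; exact ⟨h, fun hw => h2 (Or.inr hw)⟩
      · rintro ⟨h, h2⟩
        refine ⟨h, fun hw => ?_⟩
        rcases hw with rfl | hw
        · exact G.loopless.irrefl _ h
        · exact h2 hw
    rw [h1, hd, Finset.card_sdiff_add_card_inter, hdeg v]
  have claim2 : ∀ w ∈ A, ((G.neighborFinset w) \ insert v A).card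
      + (if v ∈ G.neighborFinset w then 1 else 0) = ((G.neighborFinset w) \ A).card := by
    intro w _
    have h1 : (G.neighborFinset w) \ insert v A = ((G.neighborFinset w) \ A).erase v := by
      ext u
      simp only [mem_sdiff, mem_insert, mem_erase]
      tauto
    rw [h1]
    by_cases hvw : v ∈ G.neighborFinset w
    · have hv' : v ∈ (G.neighborFinset w) \ A := by simp [hvw, hv]
      rw [if_pos hvw, Finset.card_erase_add_one hv']
    · have hv' : v ∉ (G.neighborFinset w) \ A := by simp [hvw]
      rw [if_neg hvw, Finset.erase_eq_of_notMem hv', add_zero]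
  have claim3 : ∑ w ∈ A, (if v ∈ G.neighborFinset w then 1 else 0) = d := by
    rw [hd, ← Finset.card_filter]
    congr 1
    ext w
    simp only [Finset.mem_filter, mem_inter, mem_neighborFinset]
    rw [G.adj_comm]
    tauto
  have expand : Wgt G (insert v A) = ((G.neighborFinset v) \ insert v A).card
      + ∑ w ∈ A, ((G.neighborFinset w) \ insert v A).card := by
    rw [Wgt, Finset.sum_insert hv]
  have sum2 : ∑ w ∈ A, ((G.neighborFinset w) \ insert v A).card + d = Wgt G A := by
    rw [← claim3, ← Finset.sum_add_distrib]
    exact Finset.sum_congr rfl claim2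
  omega

end Lower

section Lower2
variable {V : Type*} [Fintype V] [DecidableEq V] {G : SimpleGraph V} [DecidableRel G.Adj]

lemma exists_new_vertex {S : Set V} (hS : IsHullSet G S) (hne : S ≠ Set.univ) :
    ∃ v, v ∉ S ∧ ∃ a b, a ≠ b ∧ a ∈ S ∧ b ∈ S ∧ G.Adj v a ∧ G.Adj v b := by
  by_contra hcon
  push_neg at hcon
  have hfix : infectStep G S = S := by
    apply Set.Subset.antisymm _ (subset_infectStep G S)
    rintro v (hv | ⟨a, b, hab, ha, hb, h1, h2⟩)
    · exact hv
    · by_contra hvS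
      exact (hcon v hvS a b hab ha hb h1) h2
  have : ∀ p, infectIter G S p = S := by
    intro p; induction p with
    | zero => rfl
    | succ p ih => rw [infectIter, ih, hfix]
  obtain ⟨p, hp⟩ := hS
  exact hne ((this p) ▸ hp)

lemma key_bound (hdeg : ∀ v : V, (G.neighborFinset v).card = 3) (m : ℕ) :
    ∀ A : Finset V, (Finset.univ \ A).card = m → IsHullSet G ↑A → A ≠ Finset.univ →
    Fintype.card V + 2 ≤ Wgt G A + A.card := by
  induction m with
  | zero =>
    intro A hm _ hne
    exfalso
    apply hne
    have := Finset.card_eq_zero.mp hm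
    rw [Finset.sdiff_eq_empty_iff_subset] at this
    exact Finset.univ_subset_iff.mp this
  | succ m ih =>
    intro A hm hhull hne
    obtain ⟨v, hv, a, b, hab, ha, hb, h1, h2⟩ := exists_new_vertex hhull
      (fun h => hne (Finset.coe_eq_univ.mp h))
    rw [Finset.mem_coe] at hv ha hb
    have hd2 : 2 ≤ ((G.neighborFinset v) ∩ A).card := by
      have hsub : ({a, b} : Finset V) ⊆ (G.neighborFinset v) ∩ A := by
        intro x hx
        simp only [Finset.mem_insert, Finset.mem_singleton] at hx
        rcases hx with rfl | rfl <;> simp [mem_neighborFinset, h1, h2, ha, hb]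
      calc 2 = ({a, b} : Finset V).card := (Finset.card_pair hab).symm
        _ ≤ _ := Finset.card_le_card hsub
    have hstep := Wgt_step G hdeg hv
    by_cases hins : insert v A = Finset.univ
    · have hd3 : (G.neighborFinset v) ∩ A = G.neighborFinset v := by
        apply Finset.inter_eq_left.mpr
        intro w hw
        have : w ∈ insert v A := hins ▸ Finset.mem_univ w
        rcases Finset.mem_insert.mp this with rfl | hwA
        · exact absurd hw (by simp)
        · exact hwA
      rw [hd3, hdeg v] at hstep
      rw [hins, Wgt_univ] at hstep
      have hcardA : A.card + 1 = Fintype.card V := by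
        rw [← Finset.card_insert_of_notMem hv, hins, Finset.card_univ]
      omega
    · have hm' : (Finset.univ \ insert v A).card = m := by
        have : Finset.univ \ insert v A = (Finset.univ \ A).erase v := by
          ext u
          simp only [Finset.mem_sdiff, Finset.mem_univ, Finset.mem_insert, Finset.mem_erase,
            true_and]
          tauto
        rw [this, Finset.card_erase_of_mem (by simp [hv]), hm]
        omega
      have hhull' : IsHullSet G ↑(insert v A) := by
        apply isHullSet_mono G _ hhull
        simp only [Finset.coe_insert]
        exact Set.subset_insert _ _
      have := ih (insert v A) hm' hhull' hins
      rw [Finset.card_insert_of_notMem hv] at this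
      omega

lemma hull_card_bound (hdeg : ∀ v : V, (G.neighborFinset v).card = 3) {S : Set V}
    (hS : IsHullSet G S) :
    Fintype.card V + 2 ≤ 4 * S.ncard ∨ S.ncard = Fintype.card V := by
  classical
  set A := S.toFinset with hA
  have hcoe : (↑A : Set V) = S := Set.coe_toFinset S
  have hncard : S.ncard = A.card := by rw [Set.ncard_eq_toFinset_card']
  by_cases hne : A = Finset.univ
  · right
    rw [hncard, hne, Finset.card_univ]
  · left
    have := key_bound hdeg (Finset.univ \ A).card A rfl (hcoe ▸ hS) hne
    have hW := Wgt_le G hdeg A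
    omega

end Lower2

section GGPlemmas
variable {n : ℕ} [NeZero n] (σ : Equiv.Perm (Fin n))

lemma GGP_adj_ll {i j : Fin n} :
    (GGP n σ).Adj (inl i) (inl j) ↔ i ≠ j ∧ (j = i + 1 ∨ i = j + 1) := by
  simp [GGP, SimpleGraph.fromRel_adj]

lemma GGP_adj_li {i j : Fin n} : (GGP n σ).Adj (inl i) (inr j) ↔ i = j := by
  simp [GGP, SimpleGraph.fromRel_adj]

lemma GGP_adj_il {i j : Fin n} : (GGP n σ).Adj (inr i) (inl j) ↔ j = i := by
  constructor
  · intro h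
    rw [adj_comm, GGP_adj_li] at h
    exact h
  · rintro rfl
    rw [adj_comm, GGP_adj_li]

lemma GGP_adj_ii {i j : Fin n} :
    (GGP n σ).Adj (inr i) (inr j) ↔ i ≠ j ∧ (j = σ i ∨ i = σ j) := by
  simp [GGP, SimpleGraph.fromRel_adj]

end GGPlemmas


section Deg
variable {n : ℕ} [NeZero n] (σ : Equiv.Perm (Fin n)) [DecidableRel (GGP n σ).Adj]

open Fin.CommRing in
lemma fin_one_ne_zero (hn : 3 ≤ n) : (1 : Fin n) ≠ 0 := by
  have h : ((1:ℕ) : Fin n) = (1 : Fin n) := by norm_cast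
  rw [← h]
  intro hh
  have := congrArg Fin.val hh
  rw [Fin.val_natCast, Fin.val_zero, Nat.mod_eq_of_lt (by omega)] at this
  omega

open Fin.CommRing in
lemma fin_two_ne_zero (hn : 3 ≤ n) : (2 : Fin n) ≠ 0 := by
  have h : ((2:ℕ) : Fin n) = (2 : Fin n) := by norm_cast
  rw [← h]
  intro hh
  have := congrArg Fin.val hh
  rw [Fin.val_natCast, Fin.val_zero, Nat.mod_eq_of_lt (by omega)] at this
  omega

open Fin.CommRing in
lemma GGP_nbr_l (hn : 3 ≤ n) (i : Fin n) : (GGP n σ).neighborFinset (Sum.inl i)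
    = {Sum.inl (i+1), Sum.inl (i-1), Sum.inr i} := by
  have h10 := fin_one_ne_zero (n := n) hn
  ext w
  rw [SimpleGraph.mem_neighborFinset]
  match w with
  | Sum.inl j =>
    rw [GGP_adj_ll]
    simp only [Finset.mem_insert, Finset.mem_singleton, Sum.inl.injEq, reduceCtorEq, or_false]
    constructor
    · rintro ⟨hne, rfl | rfl⟩
      · left; rfl
      · right; rw [add_sub_cancel_right]
    · rintro (rfl | rfl)
      · exact ⟨fun h => h10 (by linear_combination -h), Or.inl rfl⟩
      · exact ⟨fun h => h10 (by linear_combination h), Or.inr (by rw [sub_add_cancel])⟩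
  | Sum.inr j =>
    rw [GGP_adj_li]
    simp only [Finset.mem_insert, Finset.mem_singleton, Sum.inr.injEq, reduceCtorEq, false_or]
    exact eq_comm

lemma GGP_nbr_r (hfix : ∀ i, σ i ≠ i) (i : Fin n) : (GGP n σ).neighborFinset (Sum.inr i)
    = {Sum.inl i, Sum.inr (σ i), Sum.inr (σ⁻¹ i)} := by
  ext w
  rw [SimpleGraph.mem_neighborFinset]
  match w with
  | Sum.inl j =>
    rw [GGP_adj_il]
    simp only [Finset.mem_insert, Finset.mem_singleton, Sum.inl.injEq, reduceCtorEq, or_false]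
  | Sum.inr j =>
    rw [GGP_adj_ii]
    simp only [Finset.mem_insert, Finset.mem_singleton, Sum.inr.injEq, reduceCtorEq, false_or]
    constructor
    · rintro ⟨hne, rfl | rfl⟩
      · left; rfl
      · right; simp
    · rintro (rfl | rfl)
      · exact ⟨fun h => hfix i h.symm, Or.inl rfl⟩
      · refine ⟨fun h => hfix i ?_, Or.inr (by simp)⟩
        conv_lhs => rw [h]
        simp
end Deg

section Deg2
variable {n : ℕ} [NeZero n] (σ : Equiv.Perm (Fin n)) [DecidableRel (GGP n σ).Adj]

open Fin.CommRing in
lemma GGP_degree (hn : 3 ≤ n) (hfix : ∀ i, σ i ≠ i) (hsq : ∀ i, σ (σ i) ≠ i) :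
    ∀ v, ((GGP n σ).neighborFinset v).card = 3 := by
  have h20 := fin_two_ne_zero (n := n) hn
  intro v
  match v with
  | Sum.inl i =>
    rw [GGP_nbr_l σ hn i]
    rw [Finset.card_insert_of_notMem, Finset.card_insert_of_notMem, Finset.card_singleton]
    · simp
    · simp only [Finset.mem_insert, Finset.mem_singleton]
      rintro (h | h)
      · rw [Sum.inl.injEq] at h
        exact h20 (by linear_combination h)
      · exact absurd h (by simp)
  | Sum.inr i =>
    rw [GGP_nbr_r σ hfix i]
    rw [Finset.card_insert_of_notMem, Finset.card_insert_of_notMem, Finset.card_singleton]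
    · simp only [Finset.mem_singleton, ne_eq, Sum.inr.injEq]
      intro h
      apply hsq i
      rw [h]
      simp
    · simp only [Finset.mem_insert, Finset.mem_singleton]
      rintro (h | h) <;> exact absurd h (by simp)
end Deg2


section Cyc
variable {n : ℕ} [NeZero n] (σ : Equiv.Perm (Fin n))

def csupp (i : Fin n) : Finset (Fin n) := (σ.cycleOf i).support

noncomputable def cb (i : Fin n) : Fin n :=
  if h : (csupp σ i).Nonempty then (csupp σ i).min' h else i

variable {σ}

lemma mem_csupp_self (hfix : ∀ i, σ i ≠ i) (i : Fin n) : i ∈ csupp σ i := by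
  rw [csupp, mem_support_cycleOf_iff]
  exact ⟨SameCycle.refl _ _, mem_support.2 (hfix i)⟩

lemma csupp_nonempty (hfix : ∀ i, σ i ≠ i) (i : Fin n) : (csupp σ i).Nonempty :=
  ⟨i, mem_csupp_self hfix i⟩

lemma cb_mem (hfix : ∀ i, σ i ≠ i) (i : Fin n) : cb σ i ∈ csupp σ i := by
  rw [cb, dif_pos (csupp_nonempty hfix i)]
  exact Finset.min'_mem _ _

lemma cyc_on (i : Fin n) : σ.IsCycleOn ↑(csupp σ i) := σ.isCycleOn_support_cycleOf i

lemma csupp_eq_of_mem {i j : Fin n} (h : j ∈ csupp σ i) : csupp σ j = csupp σ i := by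
  rw [csupp, mem_support_cycleOf_iff] at h
  rw [csupp, csupp, h.1.cycleOf_eq]

lemma cb_eq_of_mem {i j : Fin n} (h : j ∈ csupp σ i) : cb σ j = cb σ i := by
  rw [cb, cb, csupp_eq_of_mem h, dif_pos ⟨j, h⟩, dif_pos ⟨j, h⟩]

lemma cpow_mem (hfix : ∀ i, σ i ≠ i) (i : Fin n) (t : ℕ) : (σ ^ t) (cb σ i) ∈ csupp σ i := by
  induction t with
  | zero => simpa using cb_mem hfix i
  | succ t ih =>
    have := (cyc_on (σ := σ) i).1.mapsTo (by exact_mod_cast ih)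
    rw [pow_succ', Equiv.Perm.mul_apply]
    exact_mod_cast this

lemma card_csupp_mem_cycleType (hfix : ∀ i, σ i ≠ i) (i : Fin n) :
    (csupp σ i).card ∈ σ.cycleType := by
  rw [cycleType_def, Multiset.mem_map]
  exact ⟨σ.cycleOf i,
    Finset.mem_val.mpr (cycleOf_mem_cycleFactorsFinset_iff.2 (mem_support.2 (hfix i))), rfl⟩

lemma exists_pow_cb (hfix : ∀ i, σ i ≠ i) (i : Fin n) : ∃ t, (σ ^ t) (cb σ i) = i := by
  obtain ⟨t, _, ht⟩ := (cyc_on (σ := σ) i).exists_pow_eq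
    (by exact_mod_cast cb_mem hfix i) (by exact_mod_cast mem_csupp_self hfix i)
  exact ⟨t, ht⟩

noncomputable def cpos (hfix : ∀ i, σ i ≠ i) (i : Fin n) : ℕ :=
  Nat.find (exists_pow_cb hfix i)

lemma cpos_spec (hfix : ∀ i, σ i ≠ i) (i : Fin n) : (σ ^ (cpos hfix i)) (cb σ i) = i :=
  Nat.find_spec (exists_pow_cb hfix i)

lemma pow_cb_inj (hfix : ∀ i, σ i ≠ i) (i : Fin n) {t s : ℕ}
    (ht : t < (csupp σ i).card) (hs : s < (csupp σ i).card)
    (h : (σ ^ t) (cb σ i) = (σ ^ s) (cb σ i)) : t = s := by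
  have := ((cyc_on (σ := σ) i).pow_apply_eq_pow_apply
    (by exact_mod_cast cb_mem hfix i)).mp h
  rwa [Nat.ModEq, Nat.mod_eq_of_lt ht, Nat.mod_eq_of_lt hs] at this

lemma cpos_lt (hfix : ∀ i, σ i ≠ i) (i : Fin n) : cpos hfix i < (csupp σ i).card := by
  obtain ⟨t, htlt, ht⟩ := (cyc_on (σ := σ) i).exists_pow_eq
    (by exact_mod_cast cb_mem hfix i) (by exact_mod_cast mem_csupp_self hfix i)
  exact lt_of_le_of_lt (Nat.find_min' _ ht) htlt

lemma cpos_pow_cb (hfix : ∀ i, σ i ≠ i) (i : Fin n) {t : ℕ} (ht : t < (csupp σ i).card) :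
    cpos hfix ((σ ^ t) (cb σ i)) = t := by
  set j := (σ ^ t) (cb σ i) with hj
  have hjm : j ∈ csupp σ i := cpow_mem hfix i t
  have hsupp : csupp σ j = csupp σ i := csupp_eq_of_mem hjm
  have hcb : cb σ j = cb σ i := cb_eq_of_mem hjm
  have h1 : (σ ^ t) (cb σ j) = j := by rw [hcb, ← hj]
  have hle : cpos hfix j ≤ t := Nat.find_min' _ h1
  have h2 : (σ ^ (cpos hfix j)) (cb σ i) = (σ ^ t) (cb σ i) := by
    rw [← hcb, cpos_spec hfix j]
    exact h1.symm
  exact pow_cb_inj hfix i (lt_of_le_of_lt hle ht) ht h2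

lemma cpos_cb (hfix : ∀ i, σ i ≠ i) (i : Fin n) : cpos hfix (cb σ i) = 0 := by
  have := cpos_pow_cb hfix i (t := 0) (by
    have := csupp_nonempty hfix i
    exact Finset.card_pos.mpr this)
  simpa using this

lemma sq_ne (hfix : ∀ i, σ i ≠ i) (hlen : ∀ c ∈ σ.cycleType, 3 ≤ c) (i : Fin n) :
    σ (σ i) ≠ i := by
  intro h
  have h2 : (σ ^ 2) i = i := by
    rw [pow_two, Equiv.Perm.mul_apply]; exact h
  have hdvd : (csupp σ i).card ∣ 2 :=
    ((cyc_on (σ := σ) i).pow_apply_eq (by exact_mod_cast mem_csupp_self hfix i)).mp h2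
  have := hlen _ (card_csupp_mem_cycleType hfix i)
  have := Nat.le_of_dvd (by norm_num) hdvd
  omega

end Cyc

section Constr
variable {n : ℕ} [NeZero n] {σ : Equiv.Perm (Fin n)}

lemma sigma_mem_csupp (hfix : ∀ i, σ i ≠ i) (i : Fin n) : σ i ∈ csupp σ i := by
  have hm : i ∈ (↑(csupp σ i) : Set (Fin n)) := by exact_mod_cast mem_csupp_self hfix i
  exact_mod_cast (cyc_on (σ := σ) i).1.mapsTo hm

lemma cpos_succ (hfix : ∀ i, σ i ≠ i) (i : Fin n) :
    (cpos hfix (σ i) = cpos hfix i + 1 ∧ cpos hfix i + 1 < (csupp σ i).card) ∨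
    (cpos hfix i = (csupp σ i).card - 1 ∧ σ i = cb σ i) := by
  have hspec := cpos_spec hfix i
  have hlt := cpos_lt hfix i
  have hsig : (σ ^ (cpos hfix i + 1)) (cb σ i) = σ i := by
    rw [pow_succ', Equiv.Perm.mul_apply, hspec]
  rcases lt_or_ge (cpos hfix i + 1) (csupp σ i).card with h | h
  · left
    refine ⟨?_, h⟩
    have := cpos_pow_cb hfix i h
    rwa [hsig] at this
  · right
    have heq : cpos hfix i + 1 = (csupp σ i).card := le_antisymm hlt h
    have hcard : (σ ^ (csupp σ i).card) (cb σ i) = cb σ i :=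
      (cyc_on (σ := σ) i).pow_card_apply (by exact_mod_cast cb_mem hfix i)
    exact ⟨by omega, by rw [← hsig, heq, hcard]⟩

lemma exists_pred (hfix : ∀ i, σ i ≠ i) {i : Fin n} (h : 1 ≤ cpos hfix i) :
    ∃ j, σ j = i ∧ cpos hfix j = cpos hfix i - 1 ∧ csupp σ j = csupp σ i := by
  refine ⟨(σ ^ (cpos hfix i - 1)) (cb σ i), ?_, ?_, ?_⟩
  · rw [← Equiv.Perm.mul_apply, ← pow_succ', Nat.sub_add_cancel h]
    exact cpos_spec hfix i
  · exact cpos_pow_cb hfix i (by have := cpos_lt hfix i; omega)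
  · exact csupp_eq_of_mem (cpow_mem hfix i _)

noncomputable def Eset (hfix : ∀ i, σ i ≠ i) : Finset (Fin n) :=
  Finset.univ.filter (fun i => Even (cpos hfix i))

noncomputable def Ofin (hfix : ∀ i, σ i ≠ i) : Finset (Fin n) :=
  Finset.univ.filter
    (fun i => cpos hfix i = (csupp σ i).card - 1 ∧ Odd ((csupp σ i).card))

lemma mem_Eset {hfix : ∀ i, σ i ≠ i} {i : Fin n} :
    i ∈ Eset hfix ↔ Even (cpos hfix i) := by simp [Eset]

lemma mem_Ofin {hfix : ∀ i, σ i ≠ i} {i : Fin n} :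
    i ∈ Ofin hfix ↔ cpos hfix i = (csupp σ i).card - 1 ∧ Odd ((csupp σ i).card) := by
  simp [Ofin]

lemma sigma_mem_Eset (hfix : ∀ i, σ i ≠ i) {i : Fin n} (h : ¬ Even (cpos hfix i)) :
    σ i ∈ Eset hfix := by
  rw [mem_Eset]
  rcases cpos_succ hfix i with ⟨h1, _⟩ | ⟨_, h2⟩
  · rw [h1]; exact Nat.even_add_one.mpr h
  · rw [h2, cpos_cb]; exact Even.zero

lemma sigma_sq_facts (hfix : ∀ i, σ i ≠ i) (hlen3 : ∀ i, 3 ≤ (csupp σ i).card)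
    {x : Fin n} (h0 : cpos hfix x = 0) :
    cpos hfix (σ x) = 1 ∧ Even (cpos hfix (σ (σ x))) := by
  have h1 : cpos hfix (σ x) = 1 := by
    rcases cpos_succ hfix x with ⟨h1, _⟩ | ⟨h1, _⟩
    · omega
    · have := hlen3 x; omega
  refine ⟨h1, ?_⟩
  rcases cpos_succ hfix (σ x) with ⟨h2, _⟩ | ⟨_, h2⟩
  · rw [h2, h1]; decide
  · rw [h2, cpos_cb]; exact Even.zero

lemma hOsub (hfix : ∀ i, σ i ≠ i) : Ofin hfix ⊆ Eset hfix := by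
  intro i hi
  rw [mem_Ofin] at hi
  rw [mem_Eset, hi.1]
  have := hi.2
  rw [Nat.odd_iff] at this
  rw [Nat.even_iff]
  omega

lemma twoE (hfix : ∀ i, σ i ≠ i) :
    2 * (Eset hfix).card = n + (Ofin hfix).card := by
  have hbij : ((Eset hfix) \ (Ofin hfix)).card = (Finset.univ \ Eset hfix).card := by
    apply Finset.card_nbij (fun i => σ i)
    · intro i hi
      rw [Finset.mem_coe, Finset.mem_sdiff, mem_Eset, mem_Ofin] at hi
      rw [Finset.mem_coe, Finset.mem_sdiff, mem_Eset]
      refine ⟨Finset.mem_univ _, ?_⟩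
      rcases cpos_succ hfix i with ⟨h1, _⟩ | ⟨h1, _⟩
      · rw [h1]
        intro hcon
        rw [Nat.even_add_one] at hcon
        exact hcon hi.1
      · exfalso
        apply hi.2
        refine ⟨h1, ?_⟩
        have h2 := hi.1
        rw [Nat.even_iff] at h2
        have hpos : 1 ≤ (csupp σ i).card := Finset.card_pos.mpr (csupp_nonempty hfix i)
        rw [Nat.odd_iff]
        omega
    · intro i _ j _ hij
      exact σ.injective hij
    · intro x hx
      rw [Finset.coe_sdiff, Set.mem_diff, Finset.mem_coe, Finset.mem_coe, mem_Eset] at hx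
      have hodd : ¬ Even (cpos hfix x) := hx.2
      have h1 : 1 ≤ cpos hfix x := by
        rw [Nat.even_iff] at hodd; omega
      obtain ⟨j, hj1, hj2, hj3⟩ := exists_pred hfix h1
      refine ⟨j, ?_, hj1⟩
      rw [Finset.coe_sdiff, Set.mem_diff, Finset.mem_coe, Finset.mem_coe, mem_Eset, mem_Ofin]
      constructor
      · rw [hj2, Nat.even_iff]
        rw [Nat.even_iff] at hodd
        omega
      · rintro ⟨hc, -⟩
        rw [hj2, hj3] at hc
        have := cpos_lt hfix x
        have hpos : 1 ≤ (csupp σ x).card := Finset.card_pos.mpr (csupp_nonempty hfix x)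
        omega
  have h1 : ((Eset hfix) \ (Ofin hfix)).card = (Eset hfix).card - (Ofin hfix).card :=
    Finset.card_sdiff_of_subset (hOsub hfix)
  have h2 : (Finset.univ \ Eset hfix).card = n - (Eset hfix).card := by
    rw [Finset.card_sdiff_of_subset (Finset.subset_univ _), Finset.card_univ, Fintype.card_fin]
  have h3 : (Eset hfix).card ≤ n := by
    have := Finset.card_le_card (Finset.subset_univ (Eset hfix))
    rwa [Finset.card_univ, Fintype.card_fin] at this
  have h4 : (Ofin hfix).card ≤ (Eset hfix).card := Finset.card_le_card (hOsub hfix)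
  omega

lemma Ofin_card (hfix : ∀ i, σ i ≠ i) :
    (Ofin hfix).card = Multiset.card (σ.cycleType.filter (fun m => Odd m)) := by
  classical
  have hrhs : σ.cycleType.filter (fun m => Odd m)
      = (σ.cycleFactorsFinset.val.filter (fun c => Odd c.support.card)).map
        (Finset.card ∘ Equiv.Perm.support) := by
    rw [cycleType_def, Multiset.filter_map]
    rfl
  rw [hrhs, Multiset.card_map]
  have : Multiset.card (σ.cycleFactorsFinset.val.filter (fun c => Odd c.support.card))
      = (σ.cycleFactorsFinset.filter (fun c => Odd c.support.card)).card := rfl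
  rw [this]
  apply Finset.card_nbij (fun i => σ.cycleOf i)
  · intro i hi
    rw [Finset.mem_coe, mem_Ofin] at hi
    rw [Finset.mem_coe, Finset.mem_filter]
    exact ⟨cycleOf_mem_cycleFactorsFinset_iff.2 (mem_support.2 (hfix i)), hi.2⟩
  · intro i hi j hj hij
    simp only [Finset.mem_coe, mem_Ofin] at hi hj
    have hij' : σ.cycleOf i = σ.cycleOf j := hij
    have hsupp : csupp σ i = csupp σ j := by
      rw [csupp, csupp, hij']
    have hcb : cb σ i = cb σ j :=
      cb_eq_of_mem (hsupp ▸ mem_csupp_self hfix i)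
    have h1 : (σ ^ (cpos hfix i)) (cb σ i) = i := cpos_spec hfix i
    have h2 : (σ ^ (cpos hfix j)) (cb σ j) = j := cpos_spec hfix j
    rw [← h1, ← h2, hcb, hi.1, hj.1, hsupp]
  · intro c hc
    rw [Finset.coe_filter, Set.mem_setOf_eq] at hc
    obtain ⟨hcf, hodd⟩ := hc
    have hne : c.support.Nonempty := by
      rw [← Finset.card_pos]
      have := hodd
      rw [Nat.odd_iff] at this
      omega
    obtain ⟨x, hx⟩ := hne
    have hceq : c = σ.cycleOf x := cycle_is_cycleOf hx hcf
    have hxsupp : x ∈ csupp σ x := by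
      rw [csupp, ← hceq]; exact hx
    set L := (csupp σ x).card with hL
    have hLpos : 1 ≤ L := Finset.card_pos.mpr ⟨x, hxsupp⟩
    set i := (σ ^ (L - 1)) (cb σ x) with hi
    have him : i ∈ csupp σ x := cpow_mem hfix x _
    have hsupp : csupp σ i = csupp σ x := csupp_eq_of_mem him
    have hpos : cpos hfix i = L - 1 := cpos_pow_cb hfix x (by omega)
    have hOc : Odd ((csupp σ x).card) := by
      rw [csupp, ← hceq]; exact hodd
    refine ⟨i, ?_, ?_⟩
    · rw [Finset.mem_coe, mem_Ofin, hsupp]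
      exact ⟨hpos, hOc⟩
    · rw [hceq]
      have : σ.SameCycle x i := by
        rw [csupp, mem_support_cycleOf_iff] at him
        exact him.1
      exact (this.cycleOf_eq).symm

end Constr

section HullUp
variable {n : ℕ} [NeZero n] {σ : Equiv.Perm (Fin n)}
open Sum

open Fin.CommRing in
lemma hull_of_TA (hn : 3 ≤ n) (hfix : ∀ i, σ i ≠ i) (hsq : ∀ i, σ (σ i) ≠ i)
    (T : Finset (Fin n)) (a : Fin n)
    (H1 : ∀ i ∉ T, i = a ∨ i = σ a ∨ ((∃ j ∈ T, σ j = i) ∧ σ i ∈ T))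
    (H2 : a ∈ T ∨ ∃ j ∈ T, σ j = a)
    (H3 : σ a ∈ T ∨ σ (σ a) ∈ T) :
    IsHullSet (GGP n σ) ((Sum.inr '' ↑T) ∪ {Sum.inl a}) := by
  set G := GGP n σ with hG
  set S : Set (Fin n ⊕ Fin n) := (Sum.inr '' ↑T) ∪ {Sum.inl a} with hS
  have hmemT : ∀ i ∈ T, inr i ∈ S := fun i hi => Or.inl ⟨i, hi, rfl⟩
  have hmema : inl a ∈ S := Or.inr rfl
  have step1 : ∀ i : Fin n, ((∃ j ∈ T, σ j = i) ∧ σ i ∈ T) → inr i ∈ infectIter G S 1 := by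
    rintro i ⟨⟨j, hj, hji⟩, hsi⟩
    apply mem_infectIter_succ G (a := inr j) (b := inr (σ i))
    · intro h
      rw [inr.injEq] at h
      subst h
      exact hsq i hji
    · exact subset_infectIter G S 0 (hmemT j hj)
    · exact subset_infectIter G S 0 (hmemT _ hsi)
    · rw [GGP_adj_ii]
      exact ⟨fun h => hfix j (h ▸ hji), Or.inr hji.symm⟩
    · rw [GGP_adj_ii]
      exact ⟨fun h => hfix i h.symm, Or.inl rfl⟩
  have step2 : inr a ∈ infectIter G S 2 := by
    by_cases ha : a ∈ T
    · exact subset_infectIter G S 2 (hmemT a ha)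
    · obtain ⟨j, hj, hja⟩ := H2.resolve_left ha
      apply mem_infectIter_succ G (a := inl a) (b := inr j)
      · simp
      · exact subset_infectIter G S 1 hmema
      · exact subset_infectIter G S 1 (hmemT j hj)
      · rw [GGP_adj_il]
      · rw [GGP_adj_ii]
        exact ⟨fun h => hfix j (hja ▸ h ▸ rfl), Or.inr hja.symm⟩
  have step3 : inr (σ a) ∈ infectIter G S 3 := by
    rcases H3 with h | h
    · exact subset_infectIter G S 3 (hmemT _ h)
    · apply mem_infectIter_succ G (a := inr a) (b := inr (σ (σ a)))
      · intro hh
        rw [inr.injEq] at hh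
        exact hsq a hh.symm
      · exact step2
      · exact subset_infectIter G S 2 (hmemT _ h)
      · rw [GGP_adj_ii]
        exact ⟨fun hh => hfix a hh, Or.inr rfl⟩
      · rw [GGP_adj_ii]
        exact ⟨fun hh => hfix (σ a) hh.symm, Or.inl rfl⟩
  have inner : ∀ i : Fin n, inr i ∈ infectIter G S 3 := by
    intro i
    by_cases hi : i ∈ T
    · exact subset_infectIter G S 3 (hmemT i hi)
    · rcases H1 i hi with rfl | h | h
      · exact infectIter_mono_p G S (by norm_num) step2
      · rw [h]; exact step3
      · exact infectIter_mono_p G S (by norm_num) (step1 i h)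
  have h10 := fin_one_ne_zero (n := n) hn
  have outer : ∀ t : ℕ, inl (a + (t : Fin n)) ∈ infectIter G S (4 + t) := by
    intro t
    induction t with
    | zero => exact subset_infectIter G S 4 (by simpa using hmema)
    | succ t ih =>
      have hcast : ((t + 1 : ℕ) : Fin n) = (t : Fin n) + 1 := by push_cast; ring
      rw [hcast, ← add_assoc (a := a)]
      rw [show 4 + (t + 1) = (4 + t) + 1 from by ring]
      apply mem_infectIter_succ G (a := inl (a + (t : Fin n))) (b := inr (a + (t : Fin n) + 1))
      · simp
      · exact ih
      · exact infectIter_mono_p G S (by omega) (inner _)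
      · rw [GGP_adj_ll]
        constructor
        · intro hh
          exact h10 (by linear_combination hh)
        · right; rfl
      · rw [GGP_adj_li]
  refine ⟨4 + n, Set.eq_univ_of_forall fun x => ?_⟩
  match x with
  | inl y =>
    have := outer (y - a).val
    rw [Fin.cast_val_eq_self, add_sub_cancel] at this
    exact infectIter_mono_p G S (by have := (y - a).isLt; omega) this
  | inr y => exact infectIter_mono_p G S (by omega) (inner y)
end HullUp


section NcardS
variable {n : ℕ} [NeZero n]
lemma ncard_S (T : Finset (Fin n)) (a : Fin n) :
    ((Sum.inr '' ↑T : Set (Fin n ⊕ Fin n)) ∪ {Sum.inl a}).ncard = T.card + 1 := by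
  rw [Set.union_singleton, Set.ncard_insert_of_notMem (by simp),
    Set.ncard_image_of_injective _ Sum.inr_injective, Set.ncard_coe_finset]
end NcardS


theorem stmt17 (n : ℕ) [NeZero n] (hn : 3 ≤ n) (σ : Equiv.Perm (Fin n))
    (hσ : σ ≠ 1) (hfix : ∀ i, σ i ≠ i)
    (hlen : ∀ c ∈ σ.cycleType, 3 ≤ c) :
    (n + 2) / 2 ≤ hullNumber (GGP n σ) ∧
    ((∀ c ∈ σ.cycleType, Even c) → hullNumber (GGP n σ) = (n + 2) / 2) ∧
    (∀ k : ℕ, k = Multiset.card (σ.cycleType.filter (fun m => Odd m)) →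
      1 ≤ k → hullNumber (GGP n σ) ≤ (n + k) / 2) := by
  classical
  haveI hdec : DecidableRel (GGP n σ).Adj := Classical.decRel _
  have hlen3 : ∀ i, 3 ≤ (csupp σ i).card := fun i => hlen _ (card_csupp_mem_cycleType hfix i)
  have hsq : ∀ i, σ (σ i) ≠ i := sq_ne hfix hlen
  have hdeg := GGP_degree σ hn hfix hsq
  have hcardV : Fintype.card (Fin n ⊕ Fin n) = 2 * n := by
    rw [Fintype.card_sum, Fintype.card_fin]
    ring
  have hlow : (n + 2) / 2 ≤ hullNumber (GGP n σ) := by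
    have hne : {m | ∃ S : Set (Fin n ⊕ Fin n), S.ncard = m ∧ IsHullSet (GGP n σ) S}.Nonempty :=
      ⟨(Set.univ : Set (Fin n ⊕ Fin n)).ncard, Set.univ, rfl, 0, rfl⟩
    obtain ⟨S, hS1, hS2⟩ := Nat.sInf_mem hne
    have hbd := hull_card_bound hdeg hS2
    rw [hcardV] at hbd
    rw [hullNumber, ← hS1]
    rcases hbd with h | h <;> omega
  refine ⟨hlow, ?_, ?_⟩
  · -- all cycles even
    intro heven
    refine le_antisymm ?_ hlow
    set a2 : Fin n := cb σ (0 : Fin n) with ha2def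
    have ha2 : cpos hfix a2 = 0 := cpos_cb hfix _
    have H1 : ∀ i ∉ Eset hfix, i = a2 ∨ i = σ a2 ∨
        ((∃ j ∈ Eset hfix, σ j = i) ∧ σ i ∈ Eset hfix) := by
      intro i hi
      rw [mem_Eset] at hi
      right; right
      have h1 : 1 ≤ cpos hfix i := by rw [Nat.even_iff] at hi; omega
      obtain ⟨j, hj1, hj2, _⟩ := exists_pred hfix h1
      refine ⟨⟨j, ?_, hj1⟩, sigma_mem_Eset hfix hi⟩
      rw [mem_Eset, hj2]
      rw [Nat.even_iff] at hi ⊢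
      omega
    have H2 : a2 ∈ Eset hfix ∨ ∃ j ∈ Eset hfix, σ j = a2 := by
      left
      rw [mem_Eset, ha2]
      exact Even.zero
    have H3 : σ a2 ∈ Eset hfix ∨ σ (σ a2) ∈ Eset hfix := by
      right
      rw [mem_Eset]
      exact (sigma_sq_facts hfix hlen3 ha2).2
    have hhull := hull_of_TA hn hfix hsq (Eset hfix) a2 H1 H2 H3
    have hle := hullNumber_le (GGP n σ) hhull
    rw [ncard_S] at hle
    have hOempty : Ofin hfix = ∅ := by
      rw [Finset.eq_empty_iff_forall_notMem]
      intro i hi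
      rw [mem_Ofin] at hi
      have hev := heven _ (card_csupp_mem_cycleType hfix i)
      rw [Nat.even_iff] at hev
      rw [Nat.odd_iff] at hi
      omega
    have h2E := twoE hfix
    rw [hOempty, Finset.card_empty] at h2E
    omega
  · -- k odd cycles
    intro k hk hk1
    have h2E := twoE hfix
    have hOk : (Ofin hfix).card = k := by
      rw [Ofin_card hfix]
      exact hk.symm
    have hOne : (Ofin hfix).Nonempty := Finset.card_pos.mp (by omega)
    obtain ⟨e, he⟩ := hOne
    rw [mem_Ofin] at he
    obtain ⟨hepos, heodd⟩ := he
    set L := (csupp σ e).card with hL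
    have hL3 : 3 ≤ L := hlen3 e
    set a3 := (σ ^ (L - 2)) (cb σ e) with ha3
    have ha3supp : csupp σ a3 = csupp σ e := csupp_eq_of_mem (cpow_mem hfix e _)
    have ha3pos : cpos hfix a3 = L - 2 := cpos_pow_cb hfix e (by omega)
    have hsa3 : σ a3 = e := by
      rw [ha3, ← Equiv.Perm.mul_apply, ← pow_succ', show L - 2 + 1 = L - 1 from by omega,
        ← hepos]
      exact cpos_spec hfix e
    have hse : σ e = cb σ e := by
      rcases cpos_succ hfix e with ⟨h1, h2⟩ | ⟨_, h2⟩
      · rw [hepos, ← hL] at h2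
        omega
      · exact h2
    have hecb_pos : cpos hfix (σ e) = 0 := by
      rw [hse]
      exact cpos_cb hfix e
    have heE : e ∈ Eset hfix := hOsub hfix (by rw [mem_Ofin]; exact ⟨hepos, heodd⟩)
    set T := (Eset hfix).erase e with hT
    have H1 : ∀ i ∉ T, i = a3 ∨ i = σ a3 ∨ ((∃ j ∈ T, σ j = i) ∧ σ i ∈ T) := by
      intro i hi
      by_cases hia : i = a3
      · exact Or.inl hia
      by_cases hie : i = e
      · right; left
        rw [hie, hsa3]
      right; right
      have hiE : i ∉ Eset hfix := by
        intro hcon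
        exact hi (Finset.mem_erase.mpr ⟨hie, hcon⟩)
      rw [mem_Eset] at hiE
      have h1 : 1 ≤ cpos hfix i := by rw [Nat.even_iff] at hiE; omega
      obtain ⟨j, hj1, hj2, hj3⟩ := exists_pred hfix h1
      have hjE : j ∈ Eset hfix := by
        rw [mem_Eset, hj2]
        rw [Nat.even_iff] at hiE ⊢
        omega
      have hjne : j ≠ e := by
        rintro rfl
        rw [hse] at hj1
        rw [← hj1, cpos_cb] at h1
        omega
      refine ⟨⟨j, Finset.mem_erase.mpr ⟨hjne, hjE⟩, hj1⟩, ?_⟩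
      have hsiE : σ i ∈ Eset hfix := sigma_mem_Eset hfix hiE
      have hsine : σ i ≠ e := by
        intro hcon
        exact hia (σ.injective (hcon.trans hsa3.symm))
      exact Finset.mem_erase.mpr ⟨hsine, hsiE⟩
    have H2 : a3 ∈ T ∨ ∃ j ∈ T, σ j = a3 := by
      right
      refine ⟨(σ ^ (L - 3)) (cb σ e), ?_, ?_⟩
      · have hjpos : cpos hfix ((σ ^ (L - 3)) (cb σ e)) = L - 3 :=
          cpos_pow_cb hfix e (by omega)
        refine Finset.mem_erase.mpr ⟨?_, ?_⟩
        · intro hcon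
          rw [hcon, hepos] at hjpos
          omega
        · rw [mem_Eset, hjpos]
          rw [Nat.odd_iff] at heodd
          rw [Nat.even_iff]
          omega
      · rw [← Equiv.Perm.mul_apply, ← pow_succ', show L - 3 + 1 = L - 2 from by omega, ha3]
    have H3 : σ a3 ∈ T ∨ σ (σ a3) ∈ T := by
      right
      rw [hsa3]
      refine Finset.mem_erase.mpr ⟨fun hcon => hfix e hcon, ?_⟩
      rw [mem_Eset, hecb_pos]
      exact Even.zero
    have hhull := hull_of_TA hn hfix hsq T a3 H1 H2 H3
    have hle := hullNumber_le (GGP n σ) hhull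
    rw [ncard_S] at hle
    have hTcard : T.card = (Eset hfix).card - 1 := by
      rw [hT, Finset.card_erase_of_mem heE]
    have hEpos : 1 ≤ (Eset hfix).card := Finset.card_pos.mpr ⟨e, heE⟩
    omega
end
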